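/- When sampling from the softmax distribution, the gradient of the sampled softmax loss is an unbiased estimator of the full softmax gradient for every negative class i: E[∑_{j=1}^{m+1} 1(s_j = i)·p'_j] = p_i, where p'_j is the sampled softmax probability with corrected logits and p_i the full softmax probability. -/

import Mathlib

open Finset Real

/-- Under softmax sampling, the sampled softmax gradient is unbiased for
every negative class i. -/
theorem sampled_softmax_unbiased_negative {ι : Type*} [Fintype ι] [DecidableEq ι] [Nonempty ι]
    (m : ℕ) (hm : 1 ≤ m) (o1 : ℝ) (o : ι → ℝ) (q : ι → ℝ)
    (hq : ∀ j, q j = Real.exp (o j) / ∑ l, Real.exp (o l)) (i : ι) :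
    ∑ s : Fin m → ι, (∏ k, q (s k)) *
        (∑ k, if s k = i then
            Real.exp (o (s k) - Real.log (m * q (s k))) /
              (Real.exp o1 +
                ∑ k', Real.exp (o (s k') - Real.log (m * q (s k'))))
          else 0) =
      Real.exp (o i) / (Real.exp o1 + ∑ l, Real.exp (o l)) := by
  set Z := ∑ l, Real.exp (o l) with hZdef
  have hZ : 0 < Z := Finset.sum_pos (fun l _ => Real.exp_pos _) Finset.univ_nonempty
  have hmpos : (0:ℝ) < m := by exact_mod_cast hm
  have hqpos : ∀ j, 0 < q j := fun j => by rw [hq]; positivity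
  have hcor : ∀ j, Real.exp (o j - Real.log (m * q j)) = Z / m := by
    intro j
    rw [Real.exp_sub, Real.exp_log (mul_pos hmpos (hqpos j)), hq j]
    have := (Real.exp_pos (o j)).ne'
    field_simp
  have hsum1 : ∑ j, q j = 1 := by
    simp only [hq, ← Finset.sum_div]
    field_simp
    exact hZdef.symm
  have hden : ∀ s : Fin m → ι,
      Real.exp o1 + ∑ k' : Fin m, Real.exp (o (s k') - Real.log (m * q (s k')))
        = Real.exp o1 + Z := by
    intro s
    simp only [hcor, Finset.sum_const, Finset.card_univ, Fintype.card_fin, nsmul_eq_mul]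
    rw [mul_div_cancel₀ _ hmpos.ne']
  set c : ℝ := (Z / m) / (Real.exp o1 + Z) with hc
  have key : ∀ s : Fin m → ι,
      (∑ k, if s k = i then
            Real.exp (o (s k) - Real.log (m * q (s k))) /
              (Real.exp o1 +
                ∑ k', Real.exp (o (s k') - Real.log (m * q (s k'))))
          else 0)
        = c * ∑ k : Fin m, (if s k = i then (1:ℝ) else 0) := by
    intro s
    rw [Finset.mul_sum]
    refine Finset.sum_congr rfl fun k _ => ?_
    by_cases h : s k = i
    · simp only [h, if_true, hcor, Finset.sum_const, Finset.card_univ, Fintype.card_fin,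
        nsmul_eq_mul, mul_one]
      rw [mul_div_cancel₀ _ hmpos.ne']
    · simp [h]
  calc ∑ s : Fin m → ι, (∏ k, q (s k)) *
        (∑ k, if s k = i then
            Real.exp (o (s k) - Real.log (m * q (s k))) /
              (Real.exp o1 +
                ∑ k', Real.exp (o (s k') - Real.log (m * q (s k'))))
          else 0)
      = c * ∑ k : Fin m, ∑ s : Fin m → ι,
          (∏ k', q (s k')) * (if s k = i then (1:ℝ) else 0) := by
        have step : ∀ s : Fin m → ι, (∏ k, q (s k)) *
            (∑ k, if s k = i then
                Real.exp (o (s k) - Real.log (m * q (s k))) /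
                  (Real.exp o1 +
                    ∑ k', Real.exp (o (s k') - Real.log (m * q (s k'))))
              else 0)
            = ∑ k : Fin m, c * ((∏ k', q (s k')) * (if s k = i then (1:ℝ) else 0)) := by
          intro s
          rw [key s, Finset.mul_sum, Finset.mul_sum]
          exact Finset.sum_congr rfl fun k _ => by ring
        simp only [step]
        rw [Finset.sum_comm]
        simp only [← Finset.mul_sum]
    _ = c * ∑ k : Fin m, q i := by
        congr 1
        refine Finset.sum_congr rfl fun k _ => ?_
        have hrw : ∀ s : Fin m → ι,
            (∏ k', q (s k')) * (if s k = i then (1:ℝ) else 0)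
              = ∏ k', (if k' = k then (if s k' = i then q (s k') else 0) else q (s k')) := by
          intro s
          by_cases h : s k = i
          · simp only [h, if_true, mul_one]
            refine (Finset.prod_congr rfl fun k' _ => ?_).symm
            by_cases h' : k' = k <;> simp [h', h]
          · rw [if_neg h, mul_zero]
            exact (Finset.prod_eq_zero (Finset.mem_univ k) (by simp [h])).symm
        simp only [hrw]
        rw [← Fintype.prod_sum (κ := fun _ : Fin m => ι)
          (fun k' j => if k' = k then (if j = i then q j else 0) else q j)]
        have : ∀ k' : Fin m,
            (∑ j, if k' = k then (if j = i then q j else 0) else q j) =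
              (if k' = k then q i else 1) := by
          intro k'
          by_cases h' : k' = k <;> simp [h', hsum1]
        rw [Finset.prod_congr rfl fun k' _ => this k']
        simp
    _ = Real.exp (o i) / (Real.exp o1 + Z) := by
        rw [Finset.sum_const, Finset.card_univ, Fintype.card_fin, nsmul_eq_mul, hc, hq i]
        field_simp
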